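/- Let n ≥ 1 and λ ∈ (0, 2π/n]. If F ∈ D̄_n(λ) has at least one zero on the unit circle 𝕋, then F ∈ T̄_n(λ), i.e. all zeros of F lie on 𝕋 and every pair of zeros is separated by an angle of at least λ. -/

import Mathlib

open Polynomial Complex Finset
open scoped Classical

noncomputable section

/-- `uexp t = e^{it}`. -/
def uexp (t : ℝ) : ℂ := Complex.exp (Complex.I * t)

/-- Angular distance between two angles, measured on the circle `ℝ / 2πℤ`. -/
def angDist (x y : ℝ) : ℝ := ‖((x - y : ℝ) : AddCircle (2 * Real.pi))‖

/-- `polyOn n Ω` : polynomials of degree exactly `n` with all zeros in `Ω`. -/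
def polyOn (n : ℕ) (Ω : Set ℂ) : Set (Polynomial ℂ) :=
  {P | P.natDegree = n ∧ ∀ z : ℂ, P.IsRoot z → z ∈ Ω}

/-- `polyLe n Ω` : nonzero polynomials of degree at most `n` with all zeros in `Ω`. -/
def polyLe (n : ℕ) (Ω : Set ℂ) : Set (Polynomial ℂ) :=
  {P | P ≠ 0 ∧ P.natDegree ≤ n ∧ ∀ z : ℂ, P.IsRoot z → z ∈ Ω}

/-- Suffridge's class `T̄_n(λ)`. -/
def Tbar (n : ℕ) (lam : ℝ) : Set (Polynomial ℂ) :=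
  {P | ∃ (a : ℂ) (θ : Fin n → ℝ), a ≠ 0 ∧
    P = C a * ∏ j, (X - C (uexp (θ j))) ∧
    ∀ j k, j ≠ k → lam ≤ angDist (θ j) (θ k)}

/-- Suffridge's class `T_n(λ)`. -/
def Tstrict (n : ℕ) (lam : ℝ) : Set (Polynomial ℂ) :=
  {P | ∃ (a : ℂ) (θ : Fin n → ℝ), a ≠ 0 ∧
    P = C a * ∏ j, (X - C (uexp (θ j))) ∧
    ∀ j k, j ≠ k → lam < angDist (θ j) (θ k)}

/-- The quantity `e^{-inλ/2} F₊(z)/F₋(z)`. -/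
def dQuot (n : ℕ) (lam : ℝ) (F : Polynomial ℂ) (z : ℂ) : ℂ :=
  uexp (-(n * lam) / 2) * F.eval (uexp (lam / 2) * z) / F.eval (uexp (-(lam / 2)) * z)

/-- The class `D̄_n(λ)` for `λ ∈ [0, 2π/n]`. -/
def Dbar (n : ℕ) (lam : ℝ) : Set (Polynomial ℂ) :=
  if lam = 0 then polyOn n {z | ‖z‖ ≤ 1}
  else if lam = 2 * Real.pi / n then
    {P | ∃ a b : ℂ, a ≠ 0 ∧ ‖b‖ ≤ 1 ∧ P = C a * (X ^ n - C b)}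
  else {P | P.natDegree = n ∧ ∀ z : ℂ, 1 < ‖z‖ → 0 < (dQuot n lam P z).im}

/-- The class `D_n(λ)` for `λ ∈ [0, 2π/n)`. -/
def Dset (n : ℕ) (lam : ℝ) : Set (Polynomial ℂ) :=
  Tstrict n lam ∪
    (if lam = 0 then polyOn n {z | ‖z‖ < 1}
     else {P | P.natDegree = n ∧ ∀ z : ℂ, 1 ≤ ‖z‖ → 0 < (dQuot n lam P z).im})

/-- `Q_n(λ; z) = ∏_{j=1}^n (1 + e^{i(2j-n-1)λ/2} z)`. -/
def Qpoly (n : ℕ) (lam : ℝ) : Polynomial ℂ :=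
  ∏ j ∈ Finset.range n, (1 + C (uexp ((2 * (j : ℝ) + 1 - n) * lam / 2)) * X)

/-- The coefficients `C_k^{(n)}(λ)` of `Q_n(λ; ·)`. -/
def Ccoef (n k : ℕ) (lam : ℝ) : ℂ := (Qpoly n lam).coeff k

/-- The Suffridge convolution `F *_λ G` of two degree-`n` polynomials. -/
def lamConv (n : ℕ) (lam : ℝ) (F G : Polynomial ℂ) : Polynomial ℂ :=
  ∑ k ∈ Finset.range (n + 1), C (F.coeff k * G.coeff k / Ccoef n k lam) * X ^ k

/-- `preOf n lam f = f * Q_n(λ;·) = ∑ C_k^{(n)}(λ) a_k z^k`; so `f` belongs to the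
pre-coefficient class `P𝒞_n(λ)` iff `preOf n lam f ∈ 𝒞_n(λ)`. -/
def preOf (n : ℕ) (lam : ℝ) (f : Polynomial ℂ) : Polynomial ℂ :=
  ∑ k ∈ Finset.range (n + 1), C (Ccoef n k lam * f.coeff k) * X ^ k

/-- Pre-extremal polynomials `a ∑_{k=0}^n b^k z^k`, `a ≠ 0`, `|b| = 1`. -/
def PreExtremal (n : ℕ) (f : Polynomial ℂ) : Prop :=
  ∃ a b : ℂ, a ≠ 0 ∧ ‖b‖ = 1 ∧
    f = C a * ∑ k ∈ Finset.range (n + 1), C (b ^ k) * X ^ k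

/-- The `n`-inverse `F^{*n}(z) = z^n conj (F (1/ conj z))`. -/
def nInv (n : ℕ) (F : Polynomial ℂ) : Polynomial ℂ :=
  (F.reflect n).map (starRingEnd ℂ)

/-- `F₊(z) = F(e^{iλ/2} z)` as a polynomial. -/
def plusPoly (lam : ℝ) (F : Polynomial ℂ) : Polynomial ℂ :=
  F.comp (C (uexp (lam / 2)) * X)

/-- `F₋(z) = F(e^{-iλ/2} z)` as a polynomial. -/
def minusPoly (lam : ℝ) (F : Polynomial ℂ) : Polynomial ℂ :=
  F.comp (C (uexp (-(lam / 2))) * X)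

/-- The operator `Δ_λ^n[F](z) = (F₊(z) - F₋(z)) / (2 i z sin(nλ/2))`, with
`Δ_0^n[F] = F'/n`. -/
def Delta (n : ℕ) (lam : ℝ) (F : Polynomial ℂ) : Polynomial ℂ :=
  if lam = 0 then C ((n : ℂ)⁻¹) * derivative F
  else C ((2 * Complex.I * (Real.sin (n * lam / 2) : ℂ))⁻¹) *
    (plusPoly lam F - minusPoly lam F).divX

/-- `P` and `Q` (of degree `n`, zeros on the unit circle) have strictly interspersed
zeros: they are coprime and their zeros alternate on the unit circle. -/
def StrictIntersp (n : ℕ) (P Q : Polynomial ℂ) : Prop :=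
  IsCoprime P Q ∧ ∃ (a b : ℂ) (θ φ : ℕ → ℝ), a ≠ 0 ∧ b ≠ 0 ∧
    P = C a * ∏ j ∈ Finset.range n, (X - C (uexp (θ j))) ∧
    Q = C b * ∏ j ∈ Finset.range n, (X - C (uexp (φ j))) ∧
    (∀ j, j < n → θ j < φ j) ∧
    (∀ j, j + 1 < n → φ j < θ (j + 1)) ∧
    (0 < n → φ (n - 1) < θ 0 + 2 * Real.pi)

/-- The Grace–Szegő convolution of two polynomials of degree ≤ n. -/
def GSconv (n : ℕ) (F G : Polynomial ℂ) : Polynomial ℂ :=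
  ∑ k ∈ Finset.range (n + 1), C (F.coeff k * G.coeff k / (n.choose k : ℂ)) * X ^ k

/-- `Ω_{τ,γ}` : the image of the unit disk under `z ↦ τz/(1+γz)`. -/
def OmegaSet (τ : ℂ) (γ : ℝ) : Set ℂ :=
  (fun z => τ * z / (1 + (γ : ℂ) * z)) '' Metric.ball 0 1

/-- `I_γ = {z : |z| + γ|1+z| < 1}`. -/
def Iset (γ : ℝ) : Set ℂ := {z | ‖z‖ + γ * ‖1 + z‖ < 1}

/-- `O_γ = {z : |z| - γ|1+z| > 1}`. -/
def Oset (γ : ℝ) : Set ℂ := {z | 1 < ‖z‖ - γ * ‖1 + z‖}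

end


noncomputable section Helpers
open Real

lemma uexp_def (t : ℝ) : uexp t = Complex.exp (t * Complex.I) := by rw [uexp, mul_comm]

lemma uexp_re (t : ℝ) : (uexp t).re = Real.cos t := by rw [uexp_def]; exact Complex.exp_ofReal_mul_I_re t

lemma uexp_im (t : ℝ) : (uexp t).im = Real.sin t := by rw [uexp_def]; exact Complex.exp_ofReal_mul_I_im t

lemma uexp_add (s t : ℝ) : uexp (s + t) = uexp s * uexp t := by
  rw [uexp, uexp, uexp, ← Complex.exp_add]
  congr 1
  push_cast
  ring

lemma uexp_zero : uexp 0 = 1 := by simp [uexp]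

lemma uexp_ne_zero (t : ℝ) : uexp t ≠ 0 := Complex.exp_ne_zero _

lemma abs_uexp (t : ℝ) : ‖uexp t‖ = 1 := by
  rw [uexp_def]; exact Complex.norm_exp_ofReal_mul_I t

lemma conj_uexp (t : ℝ) : (starRingEnd ℂ) (uexp t) = uexp (-t) := by
  rw [uexp, uexp, ← Complex.exp_conj]
  congr 1
  simp

lemma uexp_mul_uexp_neg (t : ℝ) : uexp t * uexp (-t) = 1 := by
  rw [← uexp_add]; simp [uexp_zero]

lemma uexp_pow (t : ℝ) (n : ℕ) : uexp t ^ n = uexp (n * t) := by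
  rw [uexp, uexp, ← Complex.exp_nat_mul]
  congr 1
  push_cast
  ring

lemma uexp_inj {s t : ℝ} (h : uexp s = uexp t) : ∃ k : ℤ, s = t + k * (2 * π) := by
  rw [uexp, uexp, Complex.exp_eq_exp_iff_exists_int] at h
  obtain ⟨k, hk⟩ := h
  refine ⟨k, ?_⟩
  have h2 : Complex.I * (s : ℂ) = Complex.I * ((t : ℝ) + (k : ℝ) * (2 * π) : ℝ) := by
    push_cast
    linear_combination hk
  have := mul_left_cancel₀ Complex.I_ne_zero h2
  exact_mod_cast this

lemma abs_mul_uexp_arg (z : ℂ) : ((‖z‖ : ℝ) : ℂ) * uexp (Complex.arg z) = z := by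
  rw [uexp_def]; exact Complex.norm_mul_exp_arg_mul_I z

lemma re_pos_of_one_sub {x : ℂ} (h : ‖x‖ ≤ 1) (hne : (1 : ℂ) - x ≠ 0) :
    0 < ((1 : ℂ) - x).re := by
  have h1 : x.re ≤ ‖x‖ := Complex.re_le_norm x
  rcases lt_or_eq_of_le (h1.trans h) with h2 | h2
  · simpa using h2
  · exfalso
    have hsq : Complex.normSq x ≤ 1 := by
      rw [← Complex.sq_norm]; nlinarith [norm_nonneg x]
    have him : x.im = 0 := by
      have := Complex.normSq_apply x
      nlinarith [this, hsq]
    apply hne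
    have : x = 1 := by
      apply Complex.ext <;> simp [h2.symm, him]
    rw [this]; ring

lemma arg_abs_lt_pi_div_two {z : ℂ} (h : 0 < z.re) : |Complex.arg z| < π / 2 :=
  Complex.abs_arg_lt_pi_div_two_iff.mpr (Or.inl h)

lemma sin_neg_range {x : ℝ} (h1 : -(2 * π) < x) (h2 : x < π) (hs : Real.sin x < 0) :
    -π < x ∧ x < 0 := by
  have hx0 : x < 0 := by
    by_contra hc
    push_neg at hc
    exact absurd (Real.sin_nonneg_of_nonneg_of_le_pi hc h2.le) (not_le.mpr hs)
  refine ⟨?_, hx0⟩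
  by_contra hc
  push_neg at hc
  have : Real.sin (x + 2 * π) = Real.sin x := Real.sin_add_two_pi x
  have h3 : 0 ≤ Real.sin (x + 2 * π) :=
    Real.sin_nonneg_of_nonneg_of_le_pi (by linarith) (by linarith [Real.pi_pos])
  linarith

lemma sin_zero_range {x : ℝ} (h1 : -(2 * π) < x) (h2 : x < π) (hs : Real.sin x = 0) :
    x = 0 ∨ x = -π := by
  obtain ⟨k, hk⟩ := Real.sin_eq_zero_iff.mp hs
  have hπ := Real.pi_pos
  have hk1 : (-2 : ℝ) < (k : ℝ) := by nlinarith
  have hk2 : ((k : ℝ)) < 1 := by nlinarith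
  have hk1' : (-2 : ℤ) < k := by exact_mod_cast hk1
  have hk2' : (k : ℤ) < 1 := by exact_mod_cast hk2
  interval_cases k
  · right; rw [← hk]; push_cast; ring
  · left; rw [← hk]; push_cast; ring


lemma core_W (μ : ℝ) (v : ℂ) :
    uexp (-(μ/2)) * (1 - v) * (starRingEnd ℂ) (1 - v * uexp (-μ))
      = uexp (-(μ/2)) - (starRingEnd ℂ) v * uexp (μ/2) - v * uexp (-(μ/2))
        + ((Complex.normSq v : ℝ) : ℂ) * uexp (μ/2) := by
  have h1 : uexp (-(μ/2)) * uexp μ = uexp (μ/2) := by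
    rw [← uexp_add]; congr 1; ring
  have h2 : (starRingEnd ℂ) (1 - v * uexp (-μ)) = 1 - (starRingEnd ℂ) v * uexp μ := by
    rw [map_sub, map_one, map_mul, conj_uexp, neg_neg]
  have h3 : ((Complex.normSq v : ℝ) : ℂ) = v * (starRingEnd ℂ) v := (Complex.mul_conj v).symm
  rw [h2, h3]
  linear_combination (v * (starRingEnd ℂ) v - (starRingEnd ℂ) v) * h1
lemma core_W_im (μ : ℝ) (v : ℂ) :
    (uexp (-(μ/2)) * (1 - v) * (starRingEnd ℂ) (1 - v * uexp (-μ))).im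
      = (Complex.normSq v - 1) * Real.sin (μ/2) := by
  rw [core_W]
  have h4 : v * uexp (-(μ/2)) = (starRingEnd ℂ) ((starRingEnd ℂ) v * uexp (μ/2)) := by
    rw [map_mul, conj_uexp, RingHomCompTriple.comp_apply]
    simp [Complex.conj_conj]
  rw [h4]
  simp only [Complex.sub_im, Complex.add_im, Complex.conj_im, Complex.im_ofReal_mul,
    Complex.mul_im, Complex.ofReal_re, Complex.ofReal_im, uexp_im, uexp_re, Real.sin_neg]
  ring
lemma core_W_re (μ : ℝ) (v : ℂ) :
    (uexp (-(μ/2)) * (1 - v) * (starRingEnd ℂ) (1 - v * uexp (-μ))).re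
      = (1 + Complex.normSq v) * Real.cos (μ/2) - 2 * ((starRingEnd ℂ) v * uexp (μ/2)).re := by
  rw [core_W]
  have h4 : v * uexp (-(μ/2)) = (starRingEnd ℂ) ((starRingEnd ℂ) v * uexp (μ/2)) := by
    rw [map_mul, conj_uexp, RingHomCompTriple.comp_apply]
    simp [Complex.conj_conj]
  rw [h4]
  simp only [Complex.sub_re, Complex.add_re, Complex.conj_re, Complex.re_ofReal_mul,
    Complex.mul_re, Complex.ofReal_re, Complex.ofReal_im, uexp_re, uexp_im, Real.cos_neg]
  ring
lemma polar_W (μ : ℝ) (A B : ℂ) :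
    uexp (-(μ/2)) * B * (starRingEnd ℂ) A
      = ((‖A‖ * ‖B‖ : ℝ) : ℂ) *
          uexp (Complex.arg B - Complex.arg A - μ/2) := by
  conv_lhs => rw [← abs_mul_uexp_arg A, ← abs_mul_uexp_arg B]
  rw [map_mul, conj_uexp, Complex.conj_ofReal]
  have h5 : Complex.arg B - Complex.arg A - μ/2
      = -(μ/2) + (Complex.arg B + -(Complex.arg A)) := by ring
  rw [h5, uexp_add, uexp_add]
  push_cast
  ring

-- chunk 3

def psiArg (lam t : ℝ) (v : ℂ) : ℝ :=
  lam/2 + Complex.arg (1 - v * uexp (-(t + lam/2))) - Complex.arg (1 - v * uexp (-(t - lam/2)))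



lemma uexp_arg_of_abs_one {z : ℂ} (h : ‖z‖ = 1) : uexp (Complex.arg z) = z := by
  conv_rhs => rw [← abs_mul_uexp_arg z]
  rw [h, Complex.ofReal_one, one_mul]

lemma ne_one_sub {v : ℂ} {s : ℝ} (h : v ≠ uexp s) : (1:ℂ) - v * uexp (-s) ≠ 0 := by
  intro he
  apply h
  have h2 : v * uexp (-s) = 1 := (sub_eq_zero.mp he).symm
  have h3 : v * (uexp (-s) * uexp s) = uexp s := by rw [← mul_assoc, h2, one_mul]
  rwa [show uexp (-s) * uexp s = 1 from by
    rw [← uexp_add, show -s + s = (0:ℝ) from by ring, uexp_zero], mul_one] at h3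

lemma one_sub_ne_of_abs_lt {x : ℂ} (h : ‖x‖ < 1) : (1:ℂ) - x ≠ 0 := by
  intro he
  rw [sub_eq_zero] at he
  rw [← he] at h
  simp at h

lemma re_pos_of_abs_lt {x : ℂ} (h : ‖x‖ < 1) : 0 < ((1:ℂ) - x).re :=
  re_pos_of_one_sub h.le (one_sub_ne_of_abs_lt h)

lemma abs_div_uexp_lt {v : ℂ} {σ : ℝ} (hv : ‖v‖ ≤ 1) (hσ : 1 < σ) (s : ℝ) :
    ‖(v / (σ:ℝ)) * uexp (-s)‖ < 1 := by
  have hσ0 : (0:ℝ) < σ := by linarith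
  rw [norm_mul, abs_uexp, mul_one, norm_div, Complex.norm_real, Real.norm_eq_abs, abs_of_pos hσ0, div_lt_one hσ0]
  exact lt_of_le_of_lt hv hσ

lemma uexp_sum {n : ℕ} (d : Fin n → ℝ) : uexp (∑ j, d j) = ∏ j, uexp (d j) := by
  rw [uexp]
  push_cast
  rw [Finset.mul_sum, Complex.exp_sum]
  rfl


lemma psi_spec (lam t : ℝ) (hl0 : 0 < lam) (hl2 : lam < 2*π) (v : ℂ) (hv : ‖v‖ ≤ 1)
    (hA : (1:ℂ) - v * uexp (-(t + lam/2)) ≠ 0) (hB : (1:ℂ) - v * uexp (-(t - lam/2)) ≠ 0) :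
    (0 ≤ psiArg lam t v ∧ psiArg lam t v ≤ π) ∧
    (‖v‖ < 1 → 0 < psiArg lam t v ∧ psiArg lam t v < π) ∧
    (‖v‖ = 1 → Real.cos (lam/2) < (v * uexp (-t)).re → psiArg lam t v = π) := by
  have hπ := Real.pi_pos
  set v' := v * uexp (-(t - lam/2)) with hv'
  have habs' : ‖v'‖ = ‖v‖ := by rw [hv', norm_mul, abs_uexp, mul_one]
  have hmul : uexp (-(t - lam/2)) * uexp (-lam) = uexp (-(t + lam/2)) := by
    rw [← uexp_add]; congr 1; ring
  have hAeq : (1:ℂ) - v' * uexp (-lam) = 1 - v * uexp (-(t + lam/2)) := by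
    rw [hv', mul_assoc, hmul]
  set A := (1:ℂ) - v * uexp (-(t + lam/2)) with hAdef
  have hBdef : (1:ℂ) - v * uexp (-(t - lam/2)) = 1 - v' := by rw [hv']
  set B := (1:ℂ) - v' with hB'
  rw [hBdef] at hB
  have habsA : ‖v * uexp (-(t + lam/2))‖ ≤ 1 := by
    rw [norm_mul, abs_uexp, mul_one]; exact hv
  have habsB : ‖v'‖ ≤ 1 := by rw [habs']; exact hv
  have hreA : 0 < A.re := re_pos_of_one_sub habsA hA
  have hreB : 0 < B.re := re_pos_of_one_sub habsB hB
  have hargA := arg_abs_lt_pi_div_two hreA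
  have hargB := arg_abs_lt_pi_div_two hreB
  set x := Complex.arg B - Complex.arg A - lam/2 with hx
  have hpsi : psiArg lam t v = -x := by
    rw [psiArg, hx, ← hAdef, hBdef, ← hB']; ring
  have hW := polar_W lam A B
  have hcore : uexp (-(lam/2)) * B * (starRingEnd ℂ) A
      = uexp (-(lam/2)) * (1 - v') * (starRingEnd ℂ) (1 - v' * uexp (-lam)) := by
    rw [hAeq, hB']
  have hIm : (‖A‖ * ‖B‖) * Real.sin x
      = (Complex.normSq v' - 1) * Real.sin (lam/2) := by
    have h7 := core_W_im lam v'
    rw [← hcore, hW] at h7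
    simpa [Complex.im_ofReal_mul, uexp_im] using h7
  have hRe : (‖A‖ * ‖B‖) * Real.cos x
      = (1 + Complex.normSq v') * Real.cos (lam/2) - 2 * ((starRingEnd ℂ) v' * uexp (lam/2)).re := by
    have h7 := core_W_re lam v'
    rw [← hcore, hW] at h7
    simpa [Complex.re_ofReal_mul, uexp_re] using h7
  have hab : 0 < ‖A‖ * ‖B‖ :=
    mul_pos (norm_pos_iff.mpr hA) (norm_pos_iff.mpr hB)
  have habA' := abs_lt.mp hargA
  have habB' := abs_lt.mp hargB
  have hxlow : -(2*π) < x := by rw [hx]; linarith [habA'.1, habB'.1]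
  have hxhi : x < π := by rw [hx]; linarith [habA'.2, habB'.2]
  by_cases hlt : ‖v‖ < 1
  · have hn : Complex.normSq v' - 1 < 0 := by
      rw [← Complex.sq_norm, habs']
      nlinarith [norm_nonneg v]
    have hs2 : 0 < Real.sin (lam/2) := Real.sin_pos_of_pos_of_lt_pi (by linarith) (by linarith)
    have hsinx : Real.sin x < 0 := by nlinarith [hIm]
    obtain ⟨hr1, hr2⟩ := sin_neg_range hxlow hxhi hsinx
    rw [hpsi]
    exact ⟨⟨by linarith, by linarith⟩, fun _ => ⟨by linarith, by linarith⟩,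
      fun he => absurd he (ne_of_lt hlt)⟩
  · have heq : ‖v‖ = 1 := le_antisymm hv (not_lt.mp hlt)
    have hnormone : Complex.normSq v' = 1 := by
      rw [← Complex.sq_norm, habs', heq]; norm_num
    have hsinx : Real.sin x = 0 := by
      have h8 : (‖A‖ * ‖B‖) * Real.sin x = 0 := by
        rw [hIm, hnormone]; ring
      exact (mul_eq_zero.mp h8).resolve_left (ne_of_gt hab)
    have hx01 := sin_zero_range hxlow hxhi hsinx
    constructor
    · rcases hx01 with h | h <;> rw [hpsi, h] <;> constructor <;> linarith
    constructor
    · intro h; exact absurd heq (ne_of_lt h)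
    · intro _ hwin
      have h5 : v' * uexp (-(lam/2)) = v * uexp (-t) := by
        rw [hv', mul_assoc, ← uexp_add]
        congr 2
        ring
      have hreV : ((starRingEnd ℂ) v' * uexp (lam/2)).re = (v * uexp (-t)).re := by
        have h6 : (starRingEnd ℂ) v' * uexp (lam/2) = (starRingEnd ℂ) (v' * uexp (-(lam/2))) := by
          conv_rhs => rw [map_mul, conj_uexp, neg_neg]
        rw [h6, h5, Complex.conj_re]
      have hcosx : Real.cos x < 0 := by
        have h9 : (‖A‖ * ‖B‖) * Real.cos x
            = 2*Real.cos (lam/2) - 2*(v * uexp (-t)).re := by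
          rw [hRe, hreV, hnormone]; ring
        have h10 : ‖A‖ * ‖B‖ * Real.cos x < 0 := by rw [h9]; linarith
        have h11 := div_neg_of_neg_of_pos h10 hab
        rwa [mul_div_cancel_left₀ _ (ne_of_gt hab)] at h11
      rcases hx01 with h | h
      · exfalso; rw [h, Real.cos_zero] at hcosx; linarith
      · rw [hpsi, h]; ring

lemma dquot_eq (n : ℕ) (lam : ℝ) (c : ℂ) (hc : c ≠ 0) (w : Fin n → ℂ)
    (hw : ∀ j, ‖w j‖ ≤ 1) (ρ t : ℝ) (hρ : 1 < ρ) :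
    ∃ r : ℝ, 0 < r ∧
      dQuot n lam (C c * ∏ j, (X - C (w j))) ((ρ:ℝ) * uexp t)
        = ((r:ℝ):ℂ) * uexp (∑ j, psiArg lam t (w j / (ρ:ℝ))) := by
  have hρ0 : (0:ℝ) < ρ := by linarith
  have hρC : ((ρ:ℝ):ℂ) ≠ 0 := by exact_mod_cast ne_of_gt hρ0
  have hfab : ∀ (j : Fin n) (s : ℝ), ‖(w j / (ρ:ℝ)) * uexp (-s)‖ < 1 := by
    intro j s
    rw [norm_mul, abs_uexp, mul_one, norm_div, Complex.norm_real, Real.norm_eq_abs, abs_of_pos hρ0,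
      div_lt_one hρ0]
    exact lt_of_le_of_lt (hw j) hρ
  have hfne : ∀ (j : Fin n) (s : ℝ), (1:ℂ) - (w j / (ρ:ℝ)) * uexp (-s) ≠ 0 := by
    intro j s h
    have h2 : ((w j / (ρ:ℝ)) * uexp (-s)) = 1 := by
      have := sub_eq_zero.mp h; exact this.symm
    have h3 := hfab j s
    rw [h2] at h3
    simp at h3
  have h1u : ∀ s : ℝ, uexp s * uexp (-s) = 1 := uexp_mul_uexp_neg
  have heval : ∀ s : ℝ, Polynomial.eval (((ρ:ℝ):ℂ) * uexp s) (C c * ∏ j, (X - C (w j)))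
      = c * (((ρ:ℝ):ℂ)^n * uexp ((n:ℝ) * s)) * ∏ j, (1 - (w j / (ρ:ℝ)) * uexp (-s)) := by
    intro s
    rw [eval_mul, eval_C, eval_prod]
    have hfac : ∀ j ∈ Finset.univ, Polynomial.eval (((ρ:ℝ):ℂ) * uexp s) (X - C (w j))
        = (((ρ:ℝ):ℂ) * uexp s) * (1 - (w j / (ρ:ℝ)) * uexp (-s)) := by
      intro j _
      rw [eval_sub, eval_X, eval_C, mul_sub, mul_one]
      congr 1
      have hre : ((ρ:ℝ):ℂ) * uexp s * (w j / ((ρ:ℝ):ℂ) * uexp (-s))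
          = w j * (uexp s * uexp (-s)) * (((ρ:ℝ):ℂ)/((ρ:ℝ):ℂ)) := by ring
      rw [hre, h1u s, div_self hρC, mul_one, mul_one]
    rw [Finset.prod_congr rfl hfac, Finset.prod_mul_distrib, Finset.prod_const,
      Finset.card_univ, Fintype.card_fin, mul_pow, uexp_pow]
    ring
  have hsplit : ∀ s : ℝ, (∏ j, ((1:ℂ) - (w j / (ρ:ℝ)) * uexp (-s)))
      = (((∏ j, ‖1 - (w j / (ρ:ℝ)) * uexp (-s)‖) : ℝ) : ℂ)
        * uexp (∑ j, Complex.arg (1 - (w j / (ρ:ℝ)) * uexp (-s))) := by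
    intro s
    rw [uexp_sum, Complex.ofReal_prod, ← Finset.prod_mul_distrib]
    exact Finset.prod_congr rfl fun j _ => (abs_mul_uexp_arg _).symm
  set Mp := ∏ j, ‖1 - (w j / (ρ:ℝ)) * uexp (-(t + lam/2))‖ with hMp
  set Mm := ∏ j, ‖1 - (w j / (ρ:ℝ)) * uexp (-(t - lam/2))‖ with hMm
  set Sp := ∑ j, Complex.arg (1 - (w j / (ρ:ℝ)) * uexp (-(t + lam/2))) with hSp
  set Sm := ∑ j, Complex.arg (1 - (w j / (ρ:ℝ)) * uexp (-(t - lam/2))) with hSm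
  have hMp0 : 0 < Mp := Finset.prod_pos fun j _ => norm_pos_iff.mpr (hfne j _)
  have hMm0 : 0 < Mm := Finset.prod_pos fun j _ => norm_pos_iff.mpr (hfne j _)
  have hSval : (∑ j, psiArg lam t (w j / (ρ:ℝ))) = (n:ℝ) * (lam/2) + Sp - Sm := by
    unfold psiArg
    rw [Finset.sum_sub_distrib, Finset.sum_add_distrib, Finset.sum_const, Finset.card_univ,
      Fintype.card_fin, nsmul_eq_mul, hSp, hSm]
  refine ⟨Mp / Mm, div_pos hMp0 hMm0, ?_⟩
  rw [dQuot]
  have e1 : uexp (lam/2) * (((ρ:ℝ):ℂ) * uexp t) = ((ρ:ℝ):ℂ) * uexp (t + lam/2) := by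
    rw [show t + lam/2 = lam/2 + t from by ring, uexp_add]; ring
  have e2 : uexp (-(lam/2)) * (((ρ:ℝ):ℂ) * uexp t) = ((ρ:ℝ):ℂ) * uexp (t - lam/2) := by
    rw [show t - lam/2 = -(lam/2) + t from by ring, uexp_add]; ring
  rw [e1, e2, heval, heval, hsplit, hsplit, ← hMp, ← hMm, ← hSp, ← hSm, hSval]
  have key : uexp (-((n:ℝ)*lam)/2) * uexp ((n:ℝ)*(t+lam/2)) * uexp Sp
      = uexp ((n:ℝ)*(t-lam/2)) * uexp Sm * uexp ((n:ℝ) * (lam/2) + Sp - Sm) := by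
    rw [← uexp_add, ← uexp_add, ← uexp_add, ← uexp_add]
    congr 1
    ring
  have hMmC : ((Mm:ℝ):ℂ) ≠ 0 := by exact_mod_cast ne_of_gt hMm0
  have hpne : (((ρ:ℝ):ℂ))^n ≠ 0 := pow_ne_zero _ hρC
  rw [Complex.ofReal_div, div_mul_eq_mul_div]
  rw [div_eq_div_iff (mul_ne_zero (mul_ne_zero hc (mul_ne_zero hpne (uexp_ne_zero _)))
      (mul_ne_zero hMmC (uexp_ne_zero _))) hMmC]
  linear_combination (c * (((ρ:ℝ):ℂ))^n * ((Mp:ℝ):ℂ) * ((Mm:ℝ):ℂ)) * key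

lemma band_lemma {f : ℝ → ℝ} {a b : ℝ} (hab : a ≤ b) (hc : ContinuousOn f (Set.Icc a b))
    (hs : ∀ x ∈ Set.Icc a b, 0 < Real.sin (f x)) (hfb : 0 < f b ∧ f b < π) :
    0 < f a ∧ f a < π := by
  have hπ := Real.pi_pos
  have hfa := hs a ⟨le_refl a, hab⟩
  by_contra hcon
  have h1 : f a < -π ∨ 2*π < f a := by
    rcases not_and_or.mp hcon with h | h
    · push_neg at h
      left
      rcases lt_or_ge (f a) (-π) with h2 | h2
      · exact h2
      · exfalso
        have e : Real.sin (-(f a)) = -Real.sin (f a) := Real.sin_neg _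
        have h3 : 0 ≤ Real.sin (-(f a)) :=
          Real.sin_nonneg_of_nonneg_of_le_pi (by linarith) (by linarith)
        linarith
    · push_neg at h
      right
      rcases lt_or_ge (2*π) (f a) with h2 | h2
      · exact h2
      · exfalso
        have e : Real.sin (f a - π) = -Real.sin (f a) := by
          rw [show f a - π = -(π - f a) by ring, Real.sin_neg, Real.sin_pi_sub]
        have h3 : 0 ≤ Real.sin (f a - π) :=
          Real.sin_nonneg_of_nonneg_of_le_pi (by linarith) (by linarith)
        linarith
  rcases h1 with h | h
  · have hmem : (0:ℝ) ∈ Set.Icc (f a) (f b) := ⟨by linarith, by linarith⟩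
    obtain ⟨x, hx, hfx⟩ := intermediate_value_Icc hab hc hmem
    have h5 := hs x hx
    rw [hfx, Real.sin_zero] at h5
    linarith
  · have hmem : (2*π:ℝ) ∈ Set.Icc (f b) (f a) := ⟨by linarith, by linarith⟩
    obtain ⟨x, hx, hfx⟩ := intermediate_value_Icc' hab hc hmem
    have h5 := hs x hx
    rw [hfx, Real.sin_two_pi] at h5
    linarith

lemma psi_contAt (lam t : ℝ) (v : ℂ) (ρ₀ : ℝ) (hρ₀ : ρ₀ ≠ 0)
    (h1 : 0 < ((1:ℂ) - (v / (ρ₀:ℝ)) * uexp (-(t + lam/2))).re)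
    (h2 : 0 < ((1:ℂ) - (v / (ρ₀:ℝ)) * uexp (-(t - lam/2))).re) :
    ContinuousAt (fun ρ : ℝ => psiArg lam t (v / (ρ:ℝ))) ρ₀ := by
  have hg : ∀ s : ℝ, ContinuousAt (fun ρ : ℝ => (1:ℂ) - (v / (ρ:ℝ)) * uexp (-s)) ρ₀ := by
    intro s
    apply ContinuousAt.sub continuousAt_const
    apply ContinuousAt.mul ?_ continuousAt_const
    exact ContinuousAt.div continuousAt_const Complex.continuous_ofReal.continuousAt
      (by exact_mod_cast hρ₀)
  unfold psiArg
  apply ContinuousAt.sub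
  · apply ContinuousAt.add continuousAt_const
    exact ContinuousAt.comp (g := Complex.arg)
      (f := fun ρ : ℝ => (1:ℂ) - (v / (ρ:ℝ)) * uexp (-(t + lam/2)))
      (Complex.continuousAt_arg (Complex.mem_slitPlane_iff.mpr (Or.inl h1))) (hg _)
  · exact ContinuousAt.comp (g := Complex.arg)
      (f := fun ρ : ℝ => (1:ℂ) - (v / (ρ:ℝ)) * uexp (-(t - lam/2)))
      (Complex.continuousAt_arg (Complex.mem_slitPlane_iff.mpr (Or.inl h2))) (hg _)

lemma psi_tendsto_atTop (lam t : ℝ) (v : ℂ) :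
    Filter.Tendsto (fun ρ : ℝ => psiArg lam t (v / (ρ:ℝ))) Filter.atTop (nhds (lam/2)) := by
  have hzero : ∀ s : ℝ, Filter.Tendsto (fun ρ : ℝ => (1:ℂ) - (v / (ρ:ℝ)) * uexp (-s))
      Filter.atTop (nhds 1) := by
    intro s
    have hinv : Filter.Tendsto (fun ρ : ℝ => ((ρ:ℝ):ℂ)⁻¹) Filter.atTop (nhds 0) := by
      have h3 : Filter.Tendsto (fun ρ : ℝ => ρ⁻¹) Filter.atTop (nhds (0:ℝ)) :=
        tendsto_inv_atTop_zero
      have h4 := (Complex.continuous_ofReal.tendsto (0:ℝ)).comp h3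
      simpa [Function.comp_def, Complex.ofReal_inv] using h4
    have h5 : Filter.Tendsto (fun ρ : ℝ => (v / (ρ:ℝ)) * uexp (-s)) Filter.atTop (nhds 0) := by
      have h6 := hinv.const_mul (v * uexp (-s))
      rw [mul_zero] at h6
      have hfuneq : (fun ρ : ℝ => (v / (ρ:ℝ)) * uexp (-s))
          = fun ρ : ℝ => (v * uexp (-s)) * ((ρ:ℝ):ℂ)⁻¹ := by
        funext ρ
        rw [div_eq_mul_inv]
        ring
      rw [hfuneq]
      exact h6
    have h7 := (tendsto_const_nhds (x := (1:ℂ))).sub h5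
    simpa using h7
  have harg : ∀ s : ℝ, Filter.Tendsto (fun ρ : ℝ => Complex.arg ((1:ℂ) - (v / (ρ:ℝ)) * uexp (-s)))
      Filter.atTop (nhds 0) := by
    intro s
    have hc : ContinuousAt Complex.arg 1 :=
      Complex.continuousAt_arg (Complex.mem_slitPlane_iff.mpr (Or.inl (by norm_num)))
    have := hc.tendsto.comp (hzero s)
    simpa [Complex.arg_one, Function.comp_def] using this
  unfold psiArg
  have := ((tendsto_const_nhds (x := lam/2)).add (harg (t + lam/2))).sub (harg (t - lam/2))
  simpa using this

lemma exists_good_eps (n : ℕ) (w : Fin n → ℂ) (lam c δ : ℝ) (hδ : 0 < δ) (hδ2 : 2*δ ≤ 2*π) :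
    ∃ ε ∈ Set.Ioo (-δ) δ, ∀ j : Fin n,
      w j ≠ uexp (c + ε + lam/2) ∧ w j ≠ uexp (c + ε - lam/2) := by
  classical
  have hfin : (Set.Ioo (-δ) δ ∩ {ε | ∃ j : Fin n,
      w j = uexp (c + ε + lam/2) ∨ w j = uexp (c + ε - lam/2)}).Finite := by
    have hsub : Set.Ioo (-δ) δ ∩ {ε | ∃ j : Fin n,
        w j = uexp (c + ε + lam/2) ∨ w j = uexp (c + ε - lam/2)}
        ⊆ ⋃ (j : Fin n), ⋃ (b : Bool),
          {ε | ε ∈ Set.Ioo (-δ) δ ∧ w j = uexp (c + ε + (if b then lam/2 else -(lam/2)))} := by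
      rintro ε ⟨hε, j, hj | hj⟩
      · exact Set.mem_iUnion.mpr ⟨j, Set.mem_iUnion.mpr ⟨true, hε, by simpa using hj⟩⟩
      · refine Set.mem_iUnion.mpr ⟨j, Set.mem_iUnion.mpr ⟨false, hε, ?_⟩⟩
        simpa [sub_eq_add_neg] using hj
    apply Set.Finite.subset ?_ hsub
    apply Set.finite_iUnion
    intro j
    apply Set.finite_iUnion
    intro b
    apply Set.Subsingleton.finite
    rintro ε₁ ⟨hε₁, he₁⟩ ε₂ ⟨hε₂, he₂⟩
    have heq : uexp (c + ε₁ + (if b then lam/2 else -(lam/2)))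
        = uexp (c + ε₂ + (if b then lam/2 else -(lam/2))) := by rw [← he₁, ← he₂]
    obtain ⟨k, hk⟩ := uexp_inj heq
    have hεd : ε₁ - ε₂ = k * (2*π) := by linarith
    have hπ := Real.pi_pos
    have hbd : |ε₁ - ε₂| < 2*π := by
      rw [abs_lt]
      constructor <;> [linarith [hε₁.1, hε₂.2]; linarith [hε₁.2, hε₂.1]]
    have hk0 : k = 0 := by
      by_contra hk0
      have h1 : (1:ℝ) ≤ |(k:ℝ)| := by
        have := Int.one_le_abs hk0
        exact_mod_cast this
      rw [hεd, abs_mul, abs_of_pos (by linarith : (0:ℝ) < 2*π)] at hbd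
      nlinarith
    rw [hk0] at hεd
    push_cast at hεd
    linarith
  have hinf : (Set.Ioo (-δ) δ).Infinite := Set.Ioo_infinite (by linarith : -δ < δ)
  obtain ⟨ε, hε⟩ := (hinf.diff hfin).nonempty
  rw [Set.mem_diff] at hε
  refine ⟨ε, hε.1, fun j => ⟨fun h => ?_, fun h => ?_⟩⟩
  · exact hε.2 ⟨hε.1, j, Or.inl h⟩
  · exact hε.2 ⟨hε.1, j, Or.inr h⟩

lemma angDist_lt_extract {x lamb : ℝ} (h : ‖((x : ℝ) : AddCircle (2*π))‖ < lamb) :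
    ∃ (r : ℝ) (K : ℤ), |r| < lamb ∧ x = r + K * (2*π) := by
  have h2 := AddCircle.norm_eq (p := 2*π) (x := x)
  exact ⟨x - round ((2*π)⁻¹ * x) * (2*π), round ((2*π)⁻¹ * x), by rw [← h2]; exact h, by ring⟩

lemma norm_int_mul_div (n : ℕ) (hn : 0 < n) (m : ℤ) (hm : ¬ ((n:ℤ) ∣ m)) :
    2*π/n ≤ ‖(((m:ℝ) * (2*π/n) : ℝ) : AddCircle (2*π))‖ := by
  have hπ := Real.pi_pos
  have hn' : (0:ℝ) < n := by exact_mod_cast hn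
  rw [AddCircle.norm_eq]
  set K := round ((2*π)⁻¹ * ((m:ℝ) * (2*π/n))) with hK
  have hne : m - K * n ≠ 0 := by
    intro h
    exact hm ⟨K, by linear_combination h⟩
  have h1 : (1:ℝ) ≤ |((m - K * n : ℤ) : ℝ)| := by
    have := Int.one_le_abs hne
    exact_mod_cast this
  have he : (m:ℝ) * (2*π/n) - K * (2*π) = ((m - K * n : ℤ) : ℝ) * (2*π/n) := by
    push_cast
    field_simp
  rw [he, abs_mul, abs_of_pos (by positivity : (0:ℝ) < 2*π/n)]
  have h2 : 1 * (2*π/(n:ℝ)) ≤ |((m - K*(n:ℤ) : ℤ):ℝ)| * (2*π/(n:ℝ)) :=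
    mul_le_mul_of_nonneg_right h1 (by positivity)
  linarith

end Helpers

theorem stmt3 (n : ℕ) (hn : 1 ≤ n) (lam : ℝ) (h0 : 0 < lam) (h1 : lam ≤ 2 * Real.pi / n)
    (F : Polynomial ℂ) (hF : F ∈ Dbar n lam)
    (hroot : ∃ z : ℂ, ‖z‖ = 1 ∧ F.IsRoot z) :
    F ∈ Tbar n lam := by
  have hπ := Real.pi_pos
  have hn0 : n ≠ 0 := by omega
  have hnR : (0:ℝ) < (n:ℝ) := by exact_mod_cast Nat.pos_of_ne_zero hn0
  rw [Dbar, if_neg (ne_of_gt h0)] at hF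
  by_cases hl : lam = 2 * Real.pi / (n:ℝ)
  · rw [if_pos hl] at hF
    obtain ⟨a, b, ha, hb, hP⟩ := hF
    obtain ⟨z₀, hz₀abs, hz₀root⟩ := hroot
    have heval : a * (z₀ ^ n - b) = 0 := by
      have h2 := hz₀root
      rw [hP] at h2
      simpa [Polynomial.IsRoot] using h2
    have hzb : z₀ ^ n = b := by
      have h2 : z₀ ^ n - b = 0 := (mul_eq_zero.mp heval).resolve_left ha
      exact sub_eq_zero.mp h2
    have hζ : IsPrimitiveRoot (uexp (2*Real.pi/(n:ℝ))) n := by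
      have h2 := Complex.isPrimitiveRoot_exp n hn0
      have h3 : uexp (2*Real.pi/(n:ℝ)) = Complex.exp (2*Real.pi*Complex.I/(n:ℝ)) := by
        rw [uexp]
        congr 1
        push_cast
        ring
      rwa [h3]
    have hXn := X_pow_sub_C_eq_prod hζ (Nat.pos_of_ne_zero hn0) hzb
    have huz : uexp (Complex.arg z₀) = z₀ := uexp_arg_of_abs_one hz₀abs
    refine ⟨a, fun j => Complex.arg z₀ + ((j:ℕ):ℝ) * (2*Real.pi/(n:ℝ)), ha, ?_, ?_⟩
    · rw [hP, hXn]
      congr 1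
      rw [← Fin.prod_univ_eq_prod_range (fun i => X - C (uexp (2*Real.pi/(n:ℝ)) ^ i * z₀)) n]
      apply Finset.prod_congr rfl
      intro j _
      congr 1
      rw [uexp_add, huz, ← uexp_pow, mul_comm]
    · intro j k hjk
      rw [hl, angDist]
      have hsub : (Complex.arg z₀ + ((j:ℕ):ℝ) * (2*Real.pi/(n:ℝ)))
          - (Complex.arg z₀ + ((k:ℕ):ℝ) * (2*Real.pi/(n:ℝ)))
          = ((((j:ℕ):ℤ) - ((k:ℕ):ℤ) : ℤ) : ℝ) * (2*Real.pi/(n:ℝ)) := by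
        push_cast
        ring
      rw [hsub]
      apply norm_int_mul_div n (Nat.pos_of_ne_zero hn0)
      intro hdvd
      have hjb : (j:ℕ) < n := j.isLt
      have hkb : (k:ℕ) < n := k.isLt
      have h4 : (((j:ℕ):ℤ) - ((k:ℕ):ℤ)) = 0 :=
        Int.eq_zero_of_dvd_of_natAbs_lt_natAbs hdvd (by omega)
      have h5 : (j:ℕ) = (k:ℕ) := by omega
      exact hjk (Fin.ext h5)
  · rw [if_neg hl] at hF
    obtain ⟨hdeg, him⟩ := hF
    have hlt : lam < 2*Real.pi/(n:ℝ) := lt_of_le_of_ne h1 hl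
    have hnl : (n:ℝ) * lam < 2*Real.pi := by
      have h2 := (lt_div_iff₀ hnR).mp hlt
      nlinarith
    have hlam2π : lam < 2*Real.pi := by
      have h2 : 2*Real.pi/(n:ℝ) ≤ 2*Real.pi := by
        rw [div_le_iff₀ hnR]
        nlinarith [(by exact_mod_cast hn : (1:ℝ) ≤ (n:ℝ))]
      linarith
    have hF0 : F ≠ 0 := by
      intro h2
      rw [h2] at hdeg
      simp at hdeg
      omega
    have hsplits : F.Splits := IsAlgClosed.splits F
    have hcard : F.roots.card = n := by
      rw [← hdeg]
      exact (Polynomial.splits_iff_card_roots.mp hsplits)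
    set l := F.roots.toList with hldef
    have hlen : l.length = n := by rw [hldef, Multiset.length_toList, hcard]
    subst hlen
    set w : Fin l.length → ℂ := l.get with hwdef
    set c := F.leadingCoeff with hcdef
    have hlc : c ≠ 0 := leadingCoeff_ne_zero.mpr hF0
    have hfac : F = C c * ∏ j, (X - C (w j)) := by
      have h2 := hsplits.eq_prod_roots
      rw [hcdef]
      conv_lhs => rw [h2]
      congr 1
      have h3 : F.roots = (l : Multiset ℂ) := by rw [hldef, Multiset.coe_toList]
      rw [h3]
      rw [Multiset.map_coe, Multiset.prod_coe]
      rw [← List.ofFn_getElem_eq_map l (fun a => X - C a), List.prod_ofFn]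
      rfl
    have hroot_iff : ∀ z : ℂ, F.IsRoot z ↔ ∃ j, w j = z := by
      intro z
      rw [← Polynomial.mem_roots hF0]
      have h3 : F.roots = (l : Multiset ℂ) := by rw [hldef, Multiset.coe_toList]
      rw [h3, Multiset.mem_coe, List.mem_iff_get]
    have hwle : ∀ j, ‖w j‖ ≤ 1 := by
      intro j
      by_contra hcon
      push_neg at hcon
      have hz : 1 < ‖uexp (lam/2) * w j‖ := by
        rw [norm_mul, abs_uexp, one_mul]
        exact hcon
      have h2 := him _ hz
      have hden : F.eval (uexp (-(lam / 2)) * (uexp (lam/2) * w j)) = 0 := by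
        rw [← mul_assoc, ← uexp_add, show -(lam/2) + lam/2 = (0:ℝ) from by ring, uexp_zero,
          one_mul]
        exact (hroot_iff _).mpr ⟨j, rfl⟩
      rw [dQuot, hden, div_zero] at h2
      simp at h2
    obtain ⟨z₀, hz₀abs, hz₀root⟩ := hroot
    obtain ⟨j₀, hj₀⟩ := (hroot_iff z₀).mp hz₀root
    have hj₀abs : ‖w j₀‖ = 1 := by rw [hj₀]; exact hz₀abs
    set DD : ℝ → ℝ → ℝ := fun ρ t => ∑ j, psiArg lam t (w j / ((ρ:ℝ):ℂ)) with hDDdef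
    have hsin : ∀ ρ t : ℝ, 1 < ρ → 0 < Real.sin (DD ρ t) := by
      intro ρ t hρ
      obtain ⟨r, hr, heq⟩ := dquot_eq l.length lam c hlc w hwle ρ t hρ
      rw [← hfac] at heq
      have habsz : 1 < ‖((ρ:ℝ):ℂ) * uexp t‖ := by
        rw [norm_mul, abs_uexp, mul_one, Complex.norm_real, Real.norm_eq_abs, abs_of_pos (by linarith : (0:ℝ) < ρ)]
        exact hρ
      have h2 := him _ habsz
      rw [heq, Complex.im_ofReal_mul, uexp_im] at h2
      by_contra hc2
      push_neg at hc2
      nlinarith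
    have hcontAt : ∀ (t ρ' : ℝ), 1 < ρ' → ContinuousAt (fun σ : ℝ => DD σ t) ρ' := by
      intro t ρ' hρ'
      have h3 : ∀ j, ContinuousAt (fun σ : ℝ => psiArg lam t (w j / ((σ:ℝ):ℂ))) ρ' := by
        intro j
        exact psi_contAt lam t (w j) ρ' (by linarith)
          (re_pos_of_abs_lt (abs_div_uexp_lt (hwle j) hρ' _))
          (re_pos_of_abs_lt (abs_div_uexp_lt (hwle j) hρ' _))
      exact tendsto_finset_sum _ (fun j _ => h3 j)
    have hDlim : ∀ t : ℝ, Filter.Tendsto (fun σ : ℝ => DD σ t) Filter.atTop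
        (nhds ((l.length : ℝ) * (lam/2))) := by
      intro t
      have h3 := tendsto_finset_sum (univ : Finset (Fin l.length))
        (fun j _ => psi_tendsto_atTop lam t (w j))
      simpa [Finset.sum_const, Finset.card_univ, nsmul_eq_mul] using h3
    have hnl2 : 0 < (l.length : ℝ) * (lam/2) ∧ (l.length : ℝ) * (lam/2) < Real.pi := by
      constructor
      · positivity
      · nlinarith
    have hband : ∀ t ρ : ℝ, 1 < ρ → 0 < DD ρ t ∧ DD ρ t < Real.pi := by
      intro t ρ hρ
      have hev : ∀ᶠ σ in Filter.atTop, DD σ t ∈ Set.Ioo 0 Real.pi :=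
        (hDlim t).eventually (Ioo_mem_nhds hnl2.1 hnl2.2)
      obtain ⟨R, hR1, hR2⟩ := ((Filter.eventually_ge_atTop ρ).and hev).exists
      have hcont : ContinuousOn (fun σ : ℝ => DD σ t) (Set.Icc ρ R) := by
        intro σ hσ
        exact (hcontAt t σ (lt_of_lt_of_le hρ hσ.1)).continuousWithinAt
      exact band_lemma (f := fun σ : ℝ => DD σ t) hR1 hcont
        (fun x hx => hsin x t (lt_of_lt_of_le hρ hx.1)) ⟨hR2.1, hR2.2⟩
    -- analysis at ρ = 1 for good t
    have hkey : ∀ t : ℝ,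
        (∀ j, w j ≠ uexp (t + lam/2) ∧ w j ≠ uexp (t - lam/2)) →
        (∑ j, psiArg lam t (w j)) ≤ Real.pi := by
      intro t hgood
      have hre : ∀ (j : Fin l.length) (s : ℝ), w j ≠ uexp s →
          0 < ((1:ℂ) - (w j / ((1:ℝ):ℂ)) * uexp (-s)).re := by
        intro j s hne
        rw [Complex.ofReal_one, div_one]
        exact re_pos_of_one_sub
          (by rw [norm_mul, abs_uexp, mul_one]; exact hwle j) (ne_one_sub hne)
      have hlim1 : Filter.Tendsto (fun ρ : ℝ => DD ρ t) (nhdsWithin 1 (Set.Ioi 1))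
          (nhds (DD 1 t)) := by
        have h3 : ContinuousAt (fun σ : ℝ => DD σ t) 1 := by
          have h4 : ∀ j, ContinuousAt (fun σ : ℝ => psiArg lam t (w j / ((σ:ℝ):ℂ))) 1 := by
            intro j
            exact psi_contAt lam t (w j) 1 one_ne_zero
              (hre j _ (hgood j).1) (hre j _ (hgood j).2)
          exact tendsto_finset_sum _ (fun j _ => h4 j)
        exact h3.tendsto.mono_left nhdsWithin_le_nhds
      have hle : DD 1 t ≤ Real.pi := by
        apply le_of_tendsto hlim1
        exact eventually_nhdsWithin_of_forall (fun ρ hρ => (hband t ρ hρ).2.le)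
      have hDD1 : DD 1 t = ∑ j, psiArg lam t (w j) := by
        apply Finset.sum_congr rfl
        intro j _
        norm_num
      rwa [hDD1] at hle
    have hspec0 : ∀ (t : ℝ), (∀ j, w j ≠ uexp (t + lam/2) ∧ w j ≠ uexp (t - lam/2)) →
        ∀ j, (0 ≤ psiArg lam t (w j) ∧ psiArg lam t (w j) ≤ Real.pi) ∧
          (‖w j‖ < 1 → 0 < psiArg lam t (w j) ∧ psiArg lam t (w j) < Real.pi) ∧
          (‖w j‖ = 1 → Real.cos (lam/2) < (w j * uexp (-t)).re →
            psiArg lam t (w j) = Real.pi) := by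
      intro t hgood j
      exact psi_spec lam t h0 hlam2π (w j) (hwle j)
        (ne_one_sub (hgood j).1) (ne_one_sub (hgood j).2)
    have hall : ∀ j, ‖w j‖ = 1 := by
      by_contra hcon
      push_neg at hcon
      obtain ⟨j₁, hj₁⟩ := hcon
      have hj₁lt : ‖w j₁‖ < 1 := lt_of_le_of_ne (hwle j₁) hj₁
      obtain ⟨ε, hεmem, hεgood⟩ := exists_good_eps l.length w lam (Complex.arg (w j₀))
        (lam/2) (by linarith) (by linarith)
      set t := Complex.arg (w j₀) + ε with htdef
      have hgood : ∀ j, w j ≠ uexp (t + lam/2) ∧ w j ≠ uexp (t - lam/2) := by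
        intro j
        exact hεgood j
      have hwin : Real.cos (lam/2) < (w j₀ * uexp (-t)).re := by
        have h5 : w j₀ * uexp (-t) = uexp (Complex.arg (w j₀) + -t) := by
          rw [uexp_add, uexp_arg_of_abs_one hj₀abs]
        rw [h5, uexp_re, show Complex.arg (w j₀) + -t = -ε from by rw [htdef]; ring,
          Real.cos_neg, show Real.cos ε = Real.cos |ε| from (Real.cos_abs ε).symm]
        apply Real.cos_lt_cos_of_nonneg_of_le_pi (abs_nonneg ε) (by linarith)
        exact abs_lt.mpr ⟨hεmem.1, hεmem.2⟩
      have hspec := hspec0 t hgood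
      have hpj₀ : psiArg lam t (w j₀) = Real.pi := (hspec j₀).2.2 hj₀abs hwin
      have hpj₁ : 0 < psiArg lam t (w j₁) := ((hspec j₁).2.1 hj₁lt).1
      have hj₀j₁ : j₁ ≠ j₀ := by
        intro h5
        rw [h5] at hj₁lt
        rw [hj₀abs] at hj₁lt
        exact lt_irrefl _ hj₁lt
      have hsum : Real.pi + psiArg lam t (w j₁) ≤ ∑ j, psiArg lam t (w j) := by
        rw [← Finset.add_sum_erase _ _ (Finset.mem_univ j₀), hpj₀]
        have h6 : psiArg lam t (w j₁) ≤ ∑ j ∈ Finset.univ.erase j₀, psiArg lam t (w j) :=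
          Finset.single_le_sum (fun j _ => (hspec j).1.1)
            (Finset.mem_erase.mpr ⟨hj₀j₁, Finset.mem_univ j₁⟩)
        linarith
      have := hkey t hgood
      linarith
    refine ⟨c, fun j => Complex.arg (w j), hlc, ?_, ?_⟩
    · rw [hfac]
      congr 1
      apply Finset.prod_congr rfl
      intro j _
      rw [uexp_arg_of_abs_one (hall j)]
    · intro j k hjk
      by_contra hcon
      push_neg at hcon
      rw [angDist] at hcon
      obtain ⟨r, K, hrabs, hreq⟩ := angDist_lt_extract hcon
      obtain ⟨ε, hεmem, hεgood⟩ := exists_good_eps l.length w lam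
        (Complex.arg (w j) - r/2) ((lam - |r|)/2) (by linarith)
        (by linarith [abs_nonneg r])
      set t := Complex.arg (w j) - r/2 + ε with htdef
      have hgood : ∀ m, w m ≠ uexp (t + lam/2) ∧ w m ≠ uexp (t - lam/2) := fun m => hεgood m
      have hεabs : |ε| < (lam - |r|)/2 := abs_lt.mpr ⟨hεmem.1, hεmem.2⟩
      have hr2 : |r/2| = |r|/2 := by rw [abs_div]; norm_num
      have habsbound1 : |r/2 - ε| < lam/2 := by
        have h5 : |r/2 - ε| ≤ |r/2| + |ε| := by
          calc |r/2 - ε| = |r/2 + -ε| := by rw [sub_eq_add_neg]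
          _ ≤ |r/2| + |-ε| := abs_add_le _ _
          _ = |r/2| + |ε| := by rw [abs_neg]
        rw [hr2] at h5
        linarith
      have habsbound2 : |r/2 + ε| < lam/2 := by
        have h5 : |r/2 + ε| ≤ |r/2| + |ε| := abs_add_le _ _
        rw [hr2] at h5
        linarith
      have hwinj : Real.cos (lam/2) < (w j * uexp (-t)).re := by
        have h5 : w j * uexp (-t) = uexp (Complex.arg (w j) + -t) := by
          rw [uexp_add, uexp_arg_of_abs_one (hall j)]
        rw [h5, uexp_re, show Complex.arg (w j) + -t = r/2 - ε from by rw [htdef]; ring,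
          show Real.cos (r/2 - ε) = Real.cos |r/2 - ε| from (Real.cos_abs _).symm]
        exact Real.cos_lt_cos_of_nonneg_of_le_pi (abs_nonneg _) (by linarith) habsbound1
      have hwink : Real.cos (lam/2) < (w k * uexp (-t)).re := by
        have h5 : w k * uexp (-t) = uexp (Complex.arg (w k) + -t) := by
          rw [uexp_add, uexp_arg_of_abs_one (hall k)]
        have h6 : Complex.arg (w k) + -t = -(r/2 + ε) + ((-K : ℤ) : ℝ) * (2*Real.pi) := by
          rw [htdef]
          push_cast
          linear_combination -hreq
        rw [h5, h6, uexp_re, Real.cos_add_int_mul_two_pi, Real.cos_neg,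
          show Real.cos (r/2 + ε) = Real.cos |r/2 + ε| from (Real.cos_abs _).symm]
        exact Real.cos_lt_cos_of_nonneg_of_le_pi (abs_nonneg _) (by linarith) habsbound2
      have hspec := hspec0 t hgood
      have hpj : psiArg lam t (w j) = Real.pi := (hspec j).2.2 (hall j) hwinj
      have hpk : psiArg lam t (w k) = Real.pi := (hspec k).2.2 (hall k) hwink
      have hsum : Real.pi + Real.pi ≤ ∑ m, psiArg lam t (w m) := by
        rw [← Finset.add_sum_erase _ _ (Finset.mem_univ j), hpj]
        have h6 : psiArg lam t (w k) ≤ ∑ m ∈ Finset.univ.erase j, psiArg lam t (w m) :=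
          Finset.single_le_sum (fun m _ => (hspec m).1.1)
            (Finset.mem_erase.mpr ⟨Ne.symm hjk, Finset.mem_univ k⟩)
        rw [hpk] at h6
        linarith
      have := hkey t hgood
      linarith
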